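/- There exists a (p, p, n)-selector (i.e., a (p−1)-superimposed code) of size m = (e·p²/log₂ e)·log₂(n/p)·(1+o(1)). -/

import Mathlib

open Finset Filter Real

/-- `c` has a "private" identity row within the column set `S`:
some row where column `c` has a `1` and every other column of `S` has a `0`. -/
def HasIdRow {m n : ℕ} (M : Fin m → Fin n → Bool) (S : Finset (Fin n)) (c : Fin n) : Prop :=
  ∃ i : Fin m, M i c = true ∧ ∀ c' ∈ S, c' ≠ c → M i c' = false

instance {m n : ℕ} (M : Fin m → Fin n → Bool) (S : Finset (Fin n)) :
    DecidablePred (HasIdRow M S) := fun c => by unfold HasIdRow; infer_instance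

/-- A `(p, k, n)`-selector: every `p` columns induce a submatrix containing
at least `k` distinct rows of the identity matrix `I_p`. -/
def IsSelector {m n : ℕ} (M : Fin m → Fin n → Bool) (p k : ℕ) : Prop :=
  ∀ S : Finset (Fin n), S.card = p → k ≤ (S.filter (HasIdRow M S)).card

/-- A `(p, v, n)`-super-selector: an `(i, v i, n)`-selector for each `i = 1, …, p`. -/
def IsSuperSelector {m n : ℕ} (M : Fin m → Fin n → Bool) (p : ℕ) (v : ℕ → ℕ) : Prop :=
  ∀ j : ℕ, 1 ≤ j → j ≤ p → IsSelector M j (v j)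

/-- The componentwise Boolean OR of the columns of `M` indexed by `S`. -/
noncomputable def orCols {m n : ℕ} (M : Fin m → Fin n → Bool) (S : Finset (Fin n)) (i : Fin m) : Bool :=
  S.sup (fun c => M i c)

/-- Column `c` is covered by the Boolean vector `a`. -/
def Covered {m n : ℕ} (M : Fin m → Fin n → Bool) (a : Fin m → Bool) (c : Fin n) : Prop :=
  ∀ i : Fin m, M i c = true → a i = true

instance {m n : ℕ} (M : Fin m → Fin n → Bool) (a : Fin m → Bool) :
    DecidablePred (Covered M a) := fun c => by unfold Covered; infer_instance

/-- there exists a `(p, p, n)`-selector (a `(p-1)`-superimposed code) of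
size `m = (e·p²/log₂ e)·log₂(n/p)·(1+o(1))` (as `n → ∞`). -/
lemma exists_selector (p m n : ℕ) (hp : 1 ≤ p) (hpn : p ≤ n)
    (h : n.choose p * p * (p ^ n - (p - 1) ^ (p - 1) * p ^ (n - p)) ^ m < (p ^ n) ^ m) :
    ∃ M : Fin m → Fin n → Bool, IsSelector M p p := by
  classical
  haveI : NeZero p := ⟨by omega⟩
  set t : Finset (Fin n) → Fin n → Fin n → Finset (Fin p) := fun S c c' =>
    if c' = c then {0} else if c' ∈ S then {0}ᶜ else Finset.univ with ht
  set Good : Finset (Fin n) → Fin n → Finset (Fin n → Fin p) := fun S c =>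
    Fintype.piFinset (t S c) with hGood
  have hcardGood : ∀ S : Finset (Fin n), S.card = p → ∀ c ∈ S,
      (Good S c).card = (p - 1) ^ (p - 1) * p ^ (n - p) := by
    intro S hS c hc
    rw [hGood, Fintype.card_piFinset]
    rw [← Finset.prod_mul_prod_compl S]
    have h1 : ∏ c' ∈ Sᶜ, (t S c c').card = p ^ (n - p) := by
      rw [Finset.prod_congr rfl (fun c' hc' => ?_), Finset.prod_const,
        Finset.card_compl, hS, Fintype.card_fin]
      · rw [Finset.mem_compl] at hc'
        have hne : c' ≠ c := fun e => hc' (e ▸ hc)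
        simp [ht, hne, hc', Finset.card_univ]
    have h2 : ∏ c' ∈ S, (t S c c').card = (p - 1) ^ (p - 1) := by
      rw [← Finset.mul_prod_erase S _ hc]
      have hfc : (t S c c).card = 1 := by simp [ht]
      rw [hfc, one_mul, Finset.prod_congr rfl (fun c' hc' => ?_), Finset.prod_const,
        Finset.card_erase_of_mem hc, hS]
      · have h3 := Finset.ne_of_mem_erase hc'
        have h4 := Finset.mem_of_mem_erase hc'
        simp [ht, h3, h4, Finset.card_compl]
    rw [h1, h2]
  set Bad : Finset (Fin n) → Fin n → Finset (Fin m → Fin n → Fin p) := fun S c =>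
    Fintype.piFinset (fun _ : Fin m => (Good S c)ᶜ) with hBad
  have hcardBad : ∀ S : Finset (Fin n), S.card = p → ∀ c ∈ S,
      (Bad S c).card = (p ^ n - (p - 1) ^ (p - 1) * p ^ (n - p)) ^ m := by
    intro S hS c hc
    rw [hBad, Fintype.card_piFinset, Finset.prod_const, Finset.card_univ, Fintype.card_fin,
      Finset.card_compl, hcardGood S hS c hc]
    congr 2
    simp [Fintype.card_fun]
  set T : Finset (Fin m → Fin n → Fin p) :=
    (Finset.univ.powersetCard p).biUnion (fun S => S.biUnion (fun c => Bad S c)) with hT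
  have hTcard : T.card < (Finset.univ : Finset (Fin m → Fin n → Fin p)).card := by
    calc T.card ≤ ∑ S ∈ Finset.univ.powersetCard p, (S.biUnion (fun c => Bad S c)).card :=
          Finset.card_biUnion_le
      _ ≤ ∑ S ∈ Finset.univ.powersetCard p,
            (p * (p ^ n - (p - 1) ^ (p - 1) * p ^ (n - p)) ^ m) := by
          apply Finset.sum_le_sum
          intro S hS
          have hSc : S.card = p := (Finset.mem_powersetCard_univ.mp hS)
          calc (S.biUnion (fun c => Bad S c)).card ≤ ∑ c ∈ S, (Bad S c).card :=
                Finset.card_biUnion_le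
            _ = ∑ c ∈ S, (p ^ n - (p - 1) ^ (p - 1) * p ^ (n - p)) ^ m :=
                Finset.sum_congr rfl (fun c hc => hcardBad S hSc c hc)
            _ = p * (p ^ n - (p - 1) ^ (p - 1) * p ^ (n - p)) ^ m := by
                rw [Finset.sum_const, hSc, smul_eq_mul]
      _ = n.choose p * p * (p ^ n - (p - 1) ^ (p - 1) * p ^ (n - p)) ^ m := by
          rw [Finset.sum_const, smul_eq_mul, mul_assoc]
          congr 2
          simp [Finset.card_powersetCard]
      _ < (Finset.univ : Finset (Fin m → Fin n → Fin p)).card := by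
          rw [Finset.card_univ]
          simpa [Fintype.card_fun, ← pow_mul, mul_comm] using h
  obtain ⟨A, hA⟩ : ∃ A, A ∉ T := by
    by_contra h'
    push_neg at h'
    rw [Finset.eq_univ_iff_forall.mpr h'] at hTcard
    exact lt_irrefl _ hTcard
  refine ⟨fun i c => decide (A i c = 0), ?_⟩
  intro S hS
  have : S.filter (HasIdRow (fun i c => decide (A i c = 0)) S) = S := by
    apply Finset.filter_eq_self.mpr
    intro c hc
    have hnotbad : A ∉ Bad S c := by
      intro hmem
      exact hA (Finset.mem_biUnion.mpr ⟨S, Finset.mem_powersetCard_univ.mpr hS,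
        Finset.mem_biUnion.mpr ⟨c, hc, hmem⟩⟩)
    rw [hBad, Fintype.mem_piFinset] at hnotbad
    push_neg at hnotbad
    obtain ⟨i, hi⟩ := hnotbad
    rw [Finset.mem_compl, not_not, hGood, Fintype.mem_piFinset] at hi
    refine ⟨i, ?_, ?_⟩
    · have := hi c
      simp [ht] at this
      simp [this]
    · intro c' hc' hne
      have := hi c'
      simp [ht, hne, hc'] at this
      simp [this]
  rw [this, hS]

theorem stmt16 (p : ℕ) (hp : 1 ≤ p) :
    ∃ ε : ℕ → ℝ, Filter.Tendsto ε Filter.atTop (nhds 0) ∧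
      ∀ n : ℕ, p < n →
        ∃ (m : ℕ) (M : Fin m → Fin n → Bool), IsSelector M p p ∧
          (m : ℝ) ≤ Real.exp 1 * (p : ℝ) ^ 2 / Real.logb 2 (Real.exp 1) *
            Real.logb 2 ((n : ℝ) / p) * (1 + ε n) := by
  have hlog2 : (0:ℝ) < Real.log 2 := Real.log_pos (by norm_num)
  have hlogbE : Real.logb 2 (Real.exp 1) = 1 / Real.log 2 := by
    rw [Real.logb, Real.log_exp]
  rcases eq_or_lt_of_le hp with h1 | h2
  · -- p = 1
    refine ⟨fun _ => 0, tendsto_const_nhds, fun n hn => ⟨1, fun _ _ => true, ?_, ?_⟩⟩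
    · intro S hS
      have hfil : S.filter (HasIdRow (fun (_ : Fin 1) (_ : Fin n) => true) S) = S := by
        apply Finset.filter_eq_self.mpr
        intro c hc
        refine ⟨0, rfl, fun c' hc' hne => absurd ?_ hne⟩
        have := Finset.card_eq_one.mp (hS.trans h1.symm)
        obtain ⟨a, ha⟩ := this
        rw [ha, Finset.mem_singleton] at hc hc'
        rw [hc, hc']
      rw [hfil, hS]
    · rw [← h1, hlogbE]
      push_cast
      have hn2 : (2:ℝ) ≤ n := by exact_mod_cast by omega
      have hlogn : Real.log 2 ≤ Real.log n := Real.log_le_log (by norm_num) hn2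
      have he : (2:ℝ) ≤ Real.exp 1 := by
        have := Real.add_one_le_exp 1
        linarith
      have : (1:ℝ) ≤ Real.exp 1 * Real.log n := by
        nlinarith [Real.log_two_gt_d9]
      rw [Real.logb]
      have : Real.exp 1 * 1 ^ 2 / (1 / Real.log 2) * (Real.log (↑n / 1) / Real.log 2) * (1 + 0)
          = Real.exp 1 * Real.log n := by
        field_simp
        ring
      rw [this]
      linarith [this]
  -- now 2 ≤ p
  have hp2 : 2 ≤ p := h2
  set P : ℝ := (p : ℝ) with hP
  have hP2 : (2:ℝ) ≤ P := by rw [hP]; exact_mod_cast hp2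
  have hP0 : (0:ℝ) < P := by linarith
  have hP1 : (1:ℝ) < P := by linarith
  have hPm1 : ((p - 1 : ℕ) : ℝ) = P - 1 := by
    push_cast [Nat.cast_sub hp]; ring
  have hPm1pos : (0:ℝ) < P - 1 := by linarith
  set q : ℝ := (P - 1) ^ (p - 1) / P ^ p with hq
  have hppow : (0:ℝ) < P ^ p := by positivity
  have hq0 : 0 < q := by
    apply div_pos (by positivity) hppow
  have hq1 : q < 1 := by
    rw [hq, div_lt_one hppow]
    calc (P - 1) ^ (p - 1) ≤ P ^ (p - 1) := by
          apply pow_le_pow_left₀ (by linarith) (by linarith)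
      _ < P ^ p := by
          apply pow_lt_pow_right₀ hP1 (by omega)
  have hb0 : (0:ℝ) < 1 - q := by linarith
  -- key estimate: 1/(e p) ≤ q
  have hqe : 1 / (Real.exp 1 * P) ≤ q := by
    have hPP : P ^ (p - 1) ≤ Real.exp 1 * (P - 1) ^ (p - 1) := by
      have h5 : P ≤ Real.exp (1 / (P - 1)) * (P - 1) := by
        have h6 := Real.add_one_le_exp (1 / (P - 1))
        have h7 : (1 / (P - 1) + 1) * (P - 1) = P := by field_simp; ring
        nlinarith [Real.exp_pos (1 / (P - 1))]
      calc P ^ (p - 1) ≤ (Real.exp (1 / (P - 1)) * (P - 1)) ^ (p - 1) := by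
            apply pow_le_pow_left₀ (by linarith) h5
        _ = Real.exp (1 / (P - 1)) ^ (p - 1) * (P - 1) ^ (p - 1) := mul_pow _ _ _
        _ = Real.exp 1 * (P - 1) ^ (p - 1) := by
            rw [← Real.exp_nat_mul]
            congr 2
            rw [hPm1]
            field_simp
    rw [hq, div_le_div_iff₀ (by positivity) hppow]
    have hsplit : P ^ p = P ^ (p - 1) * P := by
      rw [← pow_succ]
      congr 1
      omega
    rw [hsplit]
    calc 1 * (P ^ (p - 1) * P) = P ^ (p - 1) * P := by ring
      _ ≤ (Real.exp 1 * (P - 1) ^ (p - 1)) * P := by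
          apply mul_le_mul_of_nonneg_right hPP (le_of_lt hP0)
      _ = (P - 1) ^ (p - 1) * (Real.exp 1 * P) := by ring
  have hlogb : 1 / (Real.exp 1 * P) ≤ -Real.log (1 - q) := by
    have := Real.log_le_sub_one_of_pos hb0
    linarith
  have hnegpos : (0:ℝ) < -Real.log (1 - q) := by
    have : (0:ℝ) < 1 / (Real.exp 1 * P) := by positivity
    linarith
  -- the epsilon function
  set U : ℕ → ℝ := fun n => Real.exp 1 * P * (P * Real.log n + Real.log P) + 1 with hU
  set ε : ℕ → ℝ := fun n =>
    max 0 (U n / (Real.exp 1 * P ^ 2 * Real.log ((n : ℝ) / P)) - 1) with hε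
  have A_pos : (0:ℝ) < Real.exp 1 * P ^ 2 := by positivity
  refine ⟨ε, ?_, ?_⟩
  · -- tendsto
    set A : ℝ := Real.exp 1 * P ^ 2 with hA
    set B : ℝ := Real.exp 1 * P * Real.log P + 1 with hB
    set C : ℝ := A * Real.log P with hC
    have h3 : Tendsto (fun x : ℝ => (x + B) / (x - C)) atTop (nhds 1) := by
      have h4 : Tendsto (fun x : ℝ => 1 + (B + C) / (x - C)) atTop (nhds 1) := by
        have h5 : Tendsto (fun x : ℝ => (B + C) / (x - C)) atTop (nhds 0) :=
          Filter.Tendsto.div_atTop tendsto_const_nhds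
            (tendsto_atTop_add_const_right _ (-C) tendsto_id)
        simpa using tendsto_const_nhds.add h5
      apply h4.congr'
      filter_upwards [eventually_gt_atTop C] with x hx
      have hne : x - C ≠ 0 := sub_ne_zero.mpr hx.ne'
      field_simp
      ring
    have hg : Tendsto (fun n : ℕ => A * Real.log n) atTop atTop := by
      apply Tendsto.const_mul_atTop A_pos
      exact Real.tendsto_log_atTop.comp tendsto_natCast_atTop_atTop
    have h2' : Tendsto (fun n : ℕ => (A * Real.log n + B) / (A * Real.log n - C))
        atTop (nhds 1) := h3.comp hg
    have h1' : Tendsto (fun n : ℕ => U n / (Real.exp 1 * P ^ 2 * Real.log ((n : ℝ) / P)))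
        atTop (nhds 1) := by
      apply h2'.congr'
      filter_upwards [eventually_ge_atTop 1] with n hn
      have hn0 : ((n : ℝ)) ≠ 0 := Nat.cast_ne_zero.mpr (by omega)
      rw [Real.log_div hn0 (ne_of_gt hP0)]
      rw [hU, hA, hB, hC]
      rw [hA]
      ring_nf
    have hmax := (tendsto_const_nhds : Tendsto (fun _ : ℕ => (0:ℝ)) atTop (nhds 0)).max
      (h1'.sub_const 1)
    simpa using hmax
  · -- main bound
    intro n hn
    have hn0 : 0 < n := by omega
    have hnp : p ≤ n := le_of_lt hn
    set D : ℝ := ((n.choose p : ℝ) * P) with hD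
    have hchoose1 : 1 ≤ n.choose p := Nat.choose_pos hnp
    have hD1 : (1:ℝ) ≤ D := by
      rw [hD]
      have : (1:ℝ) ≤ (n.choose p : ℝ) := by exact_mod_cast hchoose1
      nlinarith
    have hD0 : (0:ℝ) < D := by linarith
    have hlogD : 0 ≤ Real.log D := Real.log_nonneg hD1
    set L : ℝ := Real.log D / (-Real.log (1 - q)) with hL
    have hL0 : 0 ≤ L := div_nonneg hlogD (le_of_lt hnegpos)
    set m : ℕ := ⌊L⌋₊ + 1 with hm
    have hmL : L < (m : ℕ) := by
      rw [hm]
      exact_mod_cast Nat.lt_floor_add_one L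
    have hmL' : (m : ℝ) ≤ L + 1 := by
      rw [hm]
      push_cast
      have := Nat.floor_le hL0
      linarith
    -- the counting inequality
    have hcount : n.choose p * p * (p ^ n - (p - 1) ^ (p - 1) * p ^ (n - p)) ^ m < (p ^ n) ^ m := by
      have hGle : (p - 1) ^ (p - 1) * p ^ (n - p) ≤ p ^ n := by
        calc (p - 1) ^ (p - 1) * p ^ (n - p) ≤ p ^ (p - 1) * p ^ (n - p) := by
              apply Nat.mul_le_mul_right
              exact Nat.pow_le_pow_left (by omega) _
          _ = p ^ (p - 1 + (n - p)) := (pow_add p _ _).symm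
          _ ≤ p ^ n := Nat.pow_le_pow_right (by omega) (by omega)
      rw [← Nat.cast_lt (α := ℝ)]
      push_cast [Nat.cast_sub hGle]
      have hGq : ((p - 1 : ℕ) : ℝ) ^ (p - 1) * (P : ℝ) ^ (n - p) = q * P ^ n := by
        rw [hPm1, hq]
        rw [div_mul_eq_mul_div, eq_div_iff (ne_of_gt hppow)]
        have hnn : n - p + p = n := by omega
        rw [mul_assoc, ← pow_add, hnn]
      rw [hGq]
      have hrw : (P : ℝ) ^ n - q * P ^ n = P ^ n * (1 - q) := by ring
      rw [hrw, mul_pow]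
      have hkey : D * (1 - q) ^ m < 1 := by
        have hbm : (1 - q) ^ m = Real.exp ((m : ℝ) * Real.log (1 - q)) := by
          rw [Real.exp_nat_mul, Real.exp_log hb0]
        have hDinv : 1 / D = Real.exp (-Real.log D) := by
          rw [Real.exp_neg, Real.exp_log hD0]
          rw [one_div]
        have hlt : (m : ℝ) * Real.log (1 - q) < -Real.log D := by
          have h6 : L * (-Real.log (1 - q)) = Real.log D := by
            rw [hL, div_mul_cancel₀ _ (ne_of_gt hnegpos)]
          have h7 := mul_lt_mul_of_pos_right hmL hnegpos
          have e1 : (m : ℝ) * -Real.log (1 - q) = -((m : ℝ) * Real.log (1 - q)) := by ring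
          have e2 : L * -Real.log (1 - q) = L * (-Real.log (1 - q)) := by ring
          linarith
        have := Real.exp_lt_exp.mpr hlt
        rw [← hbm, ← hDinv] at this
        calc D * (1 - q) ^ m < D * (1 / D) := by
              apply mul_lt_mul_of_pos_left this hD0
          _ = 1 := by field_simp
      calc (n.choose p : ℝ) * P * ((P ^ n) ^ m * (1 - q) ^ m)
            = (D * (1 - q) ^ m) * (P ^ n) ^ m := by rw [hD]; ring
        _ < 1 * (P ^ n) ^ m := by
            apply mul_lt_mul_of_pos_right hkey (by positivity)
        _ = (P ^ n) ^ m := one_mul _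
    obtain ⟨M, hM⟩ := exists_selector p m n hp hnp hcount
    refine ⟨m, M, hM, ?_⟩
    -- size bound
    have hRHS : Real.exp 1 * (p : ℝ) ^ 2 / Real.logb 2 (Real.exp 1) *
        Real.logb 2 ((n : ℝ) / p) * (1 + ε n)
        = Real.exp 1 * P ^ 2 * Real.log ((n : ℝ) / P) * (1 + ε n) := by
      rw [hlogbE, Real.logb]
      field_simp
      rw [hP]
      ring
    rw [hRHS]
    set K : ℝ := Real.exp 1 * P ^ 2 * Real.log ((n : ℝ) / P) with hK
    have hKpos : 0 < K := by
      apply mul_pos A_pos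
      apply Real.log_pos
      rw [lt_div_iff₀ hP0, one_mul, hP]
      exact_mod_cast hn
    have hmU : (m : ℝ) ≤ U n := by
      -- L ≤ log D * (exp 1 * P) ≤ (P log n + log P) * (exp 1 * P)
      have hLD : L ≤ Real.log D * (Real.exp 1 * P) := by
        rw [hL, div_le_iff₀ hnegpos]
        have h7' : 1 ≤ (Real.exp 1 * P) * (-Real.log (1 - q)) := by
          have h8 : (0:ℝ) < Real.exp 1 * P := by positivity
          calc (1:ℝ) = (Real.exp 1 * P) * (1 / (Real.exp 1 * P)) := by field_simp
            _ ≤ (Real.exp 1 * P) * (-Real.log (1 - q)) := by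
                apply mul_le_mul_of_nonneg_left hlogb (le_of_lt h8)
        calc Real.log D = Real.log D * 1 := (mul_one _).symm
          _ ≤ Real.log D * ((Real.exp 1 * P) * (-Real.log (1 - q))) :=
              mul_le_mul_of_nonneg_left h7' hlogD
          _ = Real.log D * (Real.exp 1 * P) * -Real.log (1 - q) := by ring
      have hlogDle : Real.log D ≤ P * Real.log n + Real.log P := by
        rw [hD, Real.log_mul (by positivity) (ne_of_gt hP0)]
        have : Real.log (n.choose p : ℝ) ≤ P * Real.log n := by
          have hc0 : (0:ℝ) < (n.choose p : ℝ) := by exact_mod_cast Nat.choose_pos hnp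
          calc Real.log (n.choose p : ℝ) ≤ Real.log ((n : ℝ) ^ p) :=
                Real.log_le_log hc0 (by exact_mod_cast Nat.choose_le_pow n p)
            _ = P * Real.log n := by rw [Real.log_pow, hP]
        linarith
      have : L ≤ (P * Real.log n + Real.log P) * (Real.exp 1 * P) := by
        calc L ≤ Real.log D * (Real.exp 1 * P) := hLD
          _ ≤ (P * Real.log n + Real.log P) * (Real.exp 1 * P) := by
              apply mul_le_mul_of_nonneg_right hlogDle (by positivity)
      simp only [hU]
      have h9 : Real.exp 1 * P * (P * Real.log ↑n + Real.log P)
          = (P * Real.log n + Real.log P) * (Real.exp 1 * P) := by ring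
      linarith [hmL']
    have hεn : U n / K - 1 ≤ ε n := by
      rw [hε]
      exact le_max_right _ _
    have h10 : U n ≤ K * (1 + ε n) := by
      have h11 : U n / K ≤ 1 + ε n := by linarith
      calc U n = K * (U n / K) := by field_simp
        _ ≤ K * (1 + ε n) := by
            apply mul_le_mul_of_nonneg_left h11 (le_of_lt hKpos)
    linarith
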